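/- For every U ∈ Σ* and every letter X ∈ Σ: Γs(U·X) = Π(Γs(U)·overline(X)), and Γd(U) = Π(Γs(U)). -/

import Mathlib

namespace CInfWords

open scoped Classical

/-- Run-length encoding Δ of a word. -/
def rle : List ℕ → List ℕ
  | [] => []
  | [_] => [1]
  | a :: b :: l =>
    if a = b then
      match rle (b :: l) with
      | [] => [1]
      | c :: r => (c + 1) :: r
    else 1 :: rle (b :: l)

/-- Erase a leading `1`, if any. -/
def trim1 : List ℕ → List ℕ
  | 1 :: l => l
  | l => l

/-- The derivative `D`: the run-length encoding with the first and/or the last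
symbol erased when they are equal to `1`. -/
def D (w : List ℕ) : List ℕ := trim1 ((trim1 (rle w).reverse).reverse)

/-- Words over Σ = {1,2}. -/
def IsWord (w : List ℕ) : Prop := ∀ x ∈ w, x = 1 ∨ x = 2

/-- Words over Σ₀ = {0,1,2}. -/
def IsWord0 (w : List ℕ) : Prop := ∀ x ∈ w, x = 0 ∨ x = 1 ∨ x = 2

/-- Σ₀^{++}: words over Σ₀ that are empty or begin with a nonzero symbol. -/
def Spp (w : List ℕ) : Prop := IsWord0 w ∧ (w = [] ∨ w.headI ≠ 0)

/-- C^∞-words: every iterated derivative is a word over Σ = {1,2}. -/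
def Cinf (w : List ℕ) : Prop := ∀ k, IsWord (D^[k] w)

/-- The height of a C^∞-word: the least k with D^[k] w = ε. -/
noncomputable def height (w : List ℕ) : ℕ := sInf {k | D^[k] w = []}

/-- The root of a C^∞-word of height k > 0: its (k-1)-st derivative. -/
noncomputable def root (w : List ℕ) : List ℕ := D^[height w - 1] w

/-- `v` is a primitive of `w`. -/
def Primitive (v w : List ℕ) : Prop := IsWord v ∧ D v = w

/-- The complement: swap 1's and 2's. -/
def compl (w : List ℕ) : List ℕ := w.map (fun x => 3 - x)

/-- Minimal C^∞-words: every derivative is a shortest primitive of the next one. -/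
def Minimal (w : List ℕ) : Prop :=
  Cinf w ∧ 0 < height w ∧
    ∀ j, j + 2 ≤ height w → ∀ v, Primitive v (D^[j+1] w) → (D^[j] w).length ≤ v.length

/-- Maximal C^∞-words: every derivative is a longest primitive of the next one. -/
def Maximal (w : List ℕ) : Prop :=
  Cinf w ∧ 0 < height w ∧
    ∀ j, j + 2 ≤ height w → ∀ v, Primitive v (D^[j+1] w) → v.length ≤ (D^[j] w).length

def LeftMinimal (w : List ℕ) : Prop := ∃ v, Minimal v ∧ w <+: v
def RightMinimal (w : List ℕ) : Prop := ∃ v, Minimal v ∧ w <:+ v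
def LeftMaximal (w : List ℕ) : Prop := ∃ v, Maximal v ∧ w <+: v
def RightMaximal (w : List ℕ) : Prop := ∃ v, Maximal v ∧ w <:+ v

/-- Single-rooted minimal words. -/
def SRMin (w : List ℕ) : Prop := Minimal w ∧ (root w).length = 1

/-- Double-rooted minimal words. -/
def DRMin (w : List ℕ) : Prop := Minimal w ∧ (root w).length = 2

/-- The left frontier Ψ(w). -/
noncomputable def psi (w : List ℕ) : List ℕ :=
  (List.range (height w)).map fun i =>
    if i = 0 then w.getD 0 0
    else if (D^[i] w).getD 0 0 = 2 ∧ (D^[i-1] w).getD 0 0 ≠ (D^[i-1] w).getD 1 0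
      then 0
    else (D^[i] w).getD 0 0

/-- The single-rooted minimal word with left frontier U (if it exists). -/
noncomputable def srmOf (U : List ℕ) : List ℕ :=
  if h : ∃ w, SRMin w ∧ psi w = U then h.choose else []

/-- The double-rooted minimal word with left frontier U (if it exists). -/
noncomputable def drmOf (U : List ℕ) : List ℕ :=
  if h : ∃ w, DRMin w ∧ psi w = U then h.choose else []

/-- Γs: the right frontier of the single-rooted minimal word with left frontier U. -/
noncomputable def Gs (U : List ℕ) : List ℕ := psi (srmOf U).reverse

/-- Γd: the right frontier of the double-rooted minimal word with left frontier U. -/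
noncomputable def Gd (U : List ℕ) : List ℕ := psi (drmOf U).reverse

/-- Θ = Γs ∘ Γd. -/
noncomputable def Th (U : List ℕ) : List ℕ := Gs (Gd U)

/-- Π = Γd ∘ Γs. -/
noncomputable def Pp (U : List ℕ) : List ℕ := Gd (Gs U)

/-- One step in the graph G: from node U, the edge labeled 1 goes to U·1, the edge
labeled 2 goes to U·2, and the edge labeled 0 goes to Θ(U)·2. -/
noncomputable def step (U : List ℕ) (a : ℕ) : List ℕ :=
  if a = 1 then U ++ [1] else if a = 2 then U ++ [2] else Th U ++ [2]

/-- The endpoint of the path in G starting at the origin ε and labeled by W. -/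
noncomputable def pathEnd (W : List ℕ) : List ℕ := W.foldl step []

/-- W ∈ Σ₀^{++} labels a directed path in G from ε to U. -/
def LabelsPath (W U : List ℕ) : Prop := Spp W ∧ pathEnd W = U

/-- ‖U‖: the number of words in Σ₀^{++} labeling a path in G from ε to U. -/
noncomputable def normG (U : List ℕ) : ℕ := {W | LabelsPath W U}.ncard

/-- |U|: the length of the single-rooted minimal word with left frontier U. -/
noncomputable def len (U : List ℕ) : ℕ := (srmOf U).length

/-- u is the minimal part of w: the first (leftmost-occurring) factor of w that
is a single-rooted minimal word of the same height as w. -/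
def IsMinPart (u w : List ℕ) : Prop :=
  ∃ s t, w = s ++ u ++ t ∧ SRMin u ∧ height u = height w ∧
    ∀ u' s' t', w = s' ++ u' ++ t' → SRMin u' → height u' = height w →
      s.length ≤ s'.length

/-! ### Auxiliary development -/

section Aux

/-- blocks expansion: word with run lengths `L` starting with letter `a`,
letters alternating between `a` and `3 - a`. -/
def expw : List ℕ → ℕ → List ℕ
  | [], _ => []
  | n :: L, a => List.replicate n a ++ expw L (3 - a)

/-- padding of run-length word for the minimal primitive. -/
def padw (u : List ℕ) : List ℕ :=
  (if u.headI = 1 then [1] else []) ++ u ++ (if u.getLastD 0 = 1 then [1] else [])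

/-- the minimal primitive of `u` starting with `a`. -/
def prim (u : List ℕ) (a : ℕ) : List ℕ := expw (padw u) a

/-- letter after `n` alternations starting from `a`. -/
def alt (n a : ℕ) : ℕ := if n % 2 = 0 then a else 3 - a

def chain (ρ : ℕ → List ℕ) : List ℕ → List ℕ
  | [] => []
  | [a] => ρ a
  | a :: b :: T => prim (chain ρ (b :: T)) a

def sroot : ℕ → List ℕ := fun a => [a]
def droot : ℕ → List ℕ := fun a => [a, 3 - a]

def lastsC (ρ : ℕ → List ℕ) : List ℕ → List ℕ
  | [] => []
  | a :: T => (chain ρ (a :: T)).getLastD 0 :: lastsC ρ T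

-- letter arithmetic
lemma lt_mem {x : ℕ} (h : x = 1 ∨ x = 2) : 3 - x = 1 ∨ 3 - x = 2 := by
  rcases h with h | h <;> subst h <;> simp
lemma lt_inv {x : ℕ} (h : x = 1 ∨ x = 2) : 3 - (3 - x) = x := by
  rcases h with h | h <;> subst h <;> rfl
lemma lt_ne {x : ℕ} (h : x = 1 ∨ x = 2) : x ≠ 3 - x := by
  rcases h with h | h <;> subst h <;> decide
lemma lt_one (h : (1:ℕ) = 1 ∨ (1:ℕ) = 2 → False) : False := h (Or.inl rfl)
lemma lt_other {x y : ℕ} (hx : x = 1 ∨ x = 2) (hy : y = 1 ∨ y = 2) (h : y ≠ x) :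
    y = 3 - x := by rcases hx with h1 | h1 <;> rcases hy with h2 | h2 <;> subst h1 <;> subst h2 <;>
      first | rfl | exact absurd rfl h

-- IsWord basics
lemma isWord_nil : IsWord [] := by intro x hx; cases hx
lemma isWord_cons {a : ℕ} {l : List ℕ} :
    IsWord (a :: l) ↔ (a = 1 ∨ a = 2) ∧ IsWord l := by
  constructor
  · intro h; exact ⟨h a (by simp), fun x hx => h x (by simp [hx])⟩
  · rintro ⟨h1, h2⟩ x hx
    rcases List.mem_cons.1 hx with h | h
    · subst h; exact h1
    · exact h2 x h
lemma isWord_append {l₁ l₂ : List ℕ} :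
    IsWord (l₁ ++ l₂) ↔ IsWord l₁ ∧ IsWord l₂ := by
  constructor
  · intro h; exact ⟨fun x hx => h x (by simp [hx]), fun x hx => h x (by simp [hx])⟩
  · rintro ⟨h1, h2⟩ x hx; rcases List.mem_append.1 hx with h | h
    · exact h1 x h
    · exact h2 x h
lemma isWord_reverse {l : List ℕ} (h : IsWord l) : IsWord l.reverse := by
  intro x hx; exact h x (List.mem_reverse.1 hx)
lemma isWord_tail {l : List ℕ} (h : IsWord l) : IsWord l.tail := by
  intro x hx; exact h x (List.mem_of_mem_tail hx)
lemma isWord_drop {l : List ℕ} (h : IsWord l) (n : ℕ) : IsWord (l.drop n) := by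
  intro x hx; exact h x (List.mem_of_mem_drop hx)
lemma isWord_headI {l : List ℕ} (h : IsWord l) (hne : l ≠ []) :
    l.headI = 1 ∨ l.headI = 2 := by
  cases l with
  | nil => exact absurd rfl hne
  | cons a t => exact h a (by simp)
lemma isWord_getLastD {l : List ℕ} (h : IsWord l) (hne : l ≠ []) :
    l.getLastD 0 = 1 ∨ l.getLastD 0 = 2 := by
  cases l with
  | nil => exact absurd rfl hne
  | cons a t =>
    have : (a :: t).getLastD 0 = (a :: t).getLast (by simp) := by
      rw [List.getLastD_eq_getLast?, List.getLast?_eq_getLast (by simp)]; rfl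
    rw [this]
    exact h _ (List.getLast_mem _)
lemma isWord_getLastD_pos {l : List ℕ} (h : IsWord l) (hne : l ≠ []) :
    1 ≤ l.getLastD 0 := by
  rcases isWord_getLastD h hne with h' | h' <;> omega

lemma headI_reverse (l : List ℕ) : l.reverse.headI = l.getLastD 0 := by
  induction l using List.reverseRecOn with
  | nil => rfl
  | append_singleton t x ih => simp

lemma getLastD_reverse (l : List ℕ) : l.reverse.getLastD 0 = l.headI := by
  have := headI_reverse l.reverse
  rw [List.reverse_reverse] at this
  exact this.symm

lemma getLastD_append (l₁ l₂ : List ℕ) (h : l₂ ≠ []) :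
    (l₁ ++ l₂).getLastD 0 = l₂.getLastD 0 := by
  rw [← headI_reverse, ← headI_reverse, List.reverse_append]
  cases hl : l₂.reverse with
  | nil => exact absurd (by simpa using hl) h
  | cons a t => simp

lemma getLastD_cons_of_ne {a : ℕ} {l : List ℕ} (h : l ≠ []) :
    (a :: l).getLastD 0 = l.getLastD 0 := getLastD_append [a] l h

end Aux
section Aux2

lemma alt_mem {a : ℕ} (h : a = 1 ∨ a = 2) (n : ℕ) : alt n a = 1 ∨ alt n a = 2 := by
  unfold alt; split
  · exact h
  · exact lt_mem h

lemma alt_alt {a : ℕ} (h : a = 1 ∨ a = 2) (m n : ℕ) :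
    alt m (alt n a) = alt (m + n) a := by
  unfold alt
  rcases Nat.even_or_odd m with hm | hm <;> rcases Nat.even_or_odd n with hn | hn <;>
    simp [Nat.even_iff, Nat.odd_iff] at hm hn <;>
    simp [hm, hn, Nat.add_mod, lt_inv h]

lemma alt_even {a : ℕ} (n : ℕ) (h : n % 2 = 0) : alt n a = a := by simp [alt, h]
lemma alt_one (a : ℕ) : alt 1 a = 3 - a := by simp [alt]
lemma alt_two {a : ℕ} (h : a = 1 ∨ a = 2) : alt 2 a = a := alt_even 2 rfl

lemma expw_append {a : ℕ} (ha : a = 1 ∨ a = 2) (L₁ L₂ : List ℕ) :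
    expw (L₁ ++ L₂) a = expw L₁ a ++ expw L₂ (alt L₁.length a) := by
  induction L₁ generalizing a with
  | nil => simp [expw, alt]
  | cons n L ih =>
    have h1 : alt L.length (3 - a) = alt (n :: L).length a := by
      rw [← alt_one a, alt_alt ha, List.length_cons, Nat.add_comm]
    simp only [List.cons_append, expw, List.append_eq, ih (lt_mem ha), List.append_assoc, h1]

lemma length_expw (L : List ℕ) (a : ℕ) : (expw L a).length = L.sum := by
  induction L generalizing a with
  | nil => rfl
  | cons n L ih => simp [expw, ih]

lemma isWord_expw {L : List ℕ} {a : ℕ} (h : a = 1 ∨ a = 2) : IsWord (expw L a) := by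
  induction L generalizing a with
  | nil => exact isWord_nil
  | cons n L ih =>
    rw [expw, isWord_append]
    exact ⟨fun x hx => by rw [List.eq_of_mem_replicate hx]; exact h, ih (lt_mem h)⟩

lemma headI_expw {n : ℕ} (L : List ℕ) {a : ℕ} (hn : 1 ≤ n) :
    (expw (n :: L) a).headI = a := by
  rw [expw]
  cases n with
  | zero => omega
  | succ m => simp [List.replicate_succ]

lemma expw_ne_nil {n : ℕ} (L : List ℕ) (a : ℕ) (hn : 1 ≤ n) :
    expw (n :: L) a ≠ [] := by
  rw [expw]
  cases n with
  | zero => omega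
  | succ m => simp [List.replicate_succ]

lemma expw_cons_pos {n : ℕ} (L : List ℕ) (a : ℕ) (hn : 1 ≤ n) :
    expw (n :: L) a = a :: (List.replicate (n - 1) a ++ expw L (3 - a)) := by
  rw [expw]
  cases n with
  | zero => omega
  | succ m => simp [List.replicate_succ]

lemma rev_expw {a : ℕ} (ha : a = 1 ∨ a = 2) (L : List ℕ) :
    (expw L a).reverse = expw L.reverse (alt (L.length + 1) a) := by
  induction L generalizing a with
  | nil => rfl
  | cons n L ih =>
    have hc : alt ((n :: L).length + 1) a = 1 ∨ alt ((n :: L).length + 1) a = 2 :=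
      alt_mem ha _
    rw [expw, List.reverse_append, ih (lt_mem ha), List.reverse_cons,
      expw_append hc]
    have h1 : alt (L.length + 1) (3 - a) = alt ((n :: L).length + 1) a := by
      rw [← alt_one a, alt_alt ha, List.length_cons]
    have h2 : expw [n] (alt L.reverse.length (alt ((n :: L).length + 1) a)) =
        List.replicate n a := by
      rw [List.length_reverse, alt_alt ha, expw]
      have : alt (L.length + ((n :: L).length + 1)) a = a := by
        apply alt_even
        simp [List.length_cons]
        omega
      rw [this]
      simp [expw]
    rw [h1, h2, List.reverse_replicate]

lemma getLastD_expw {a : ℕ} (ha : a = 1 ∨ a = 2) {n : ℕ} (L : List ℕ) (hn : 1 ≤ n) :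
    (expw (L ++ [n]) a).getLastD 0 = alt (L.length + 1 + 1) a := by
  rw [← headI_reverse, rev_expw ha, List.reverse_append]
  simp only [List.reverse_singleton, List.singleton_append, List.length_append,
    List.length_singleton]
  rw [headI_expw _ hn]

end Aux2
section Aux3

lemma rle_pos : ∀ (v : List ℕ), ∀ n ∈ rle v, 1 ≤ n := by
  intro v
  induction v with
  | nil => intro n hn; simp [rle] at hn
  | cons a t ih =>
    cases t with
    | nil => intro n hn; simp [rle] at hn; omega
    | cons b s =>
      intro n hn
      rw [rle] at hn
      split at hn
      · rcases hr : rle (b :: s) with _ | ⟨c, r⟩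
        · rw [hr] at hn; simp at hn; omega
        · rw [hr] at hn
          simp at hn
          rcases hn with hn | hn
          · have := ih c (by rw [hr]; simp)
            omega
          · exact ih n (by rw [hr]; simp [hn])
      · rcases List.mem_cons.1 hn with h | h
        · omega
        · exact ih n h

lemma rle_sum : ∀ (v : List ℕ), (rle v).sum = v.length := by
  intro v
  induction v with
  | nil => rfl
  | cons a t ih =>
    cases t with
    | nil => rfl
    | cons b s =>
      rw [rle]
      split
      · rcases hr : rle (b :: s) with _ | ⟨c, r⟩
        · rw [hr] at ih; simp at ih
        · rw [hr] at ih
          simp only [List.sum_cons, List.length_cons] at ih ⊢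
          omega
      · simp only [List.sum_cons, List.length_cons, ih]
        omega

lemma rle_ne_nil {v : List ℕ} (h : v ≠ []) : rle v ≠ [] := by
  intro hr
  have := rle_sum v
  rw [hr] at this
  simp at this
  exact h (List.length_eq_zero_iff.1 this.symm)

lemma rle_replicate_append {n a : ℕ} {w : List ℕ} (hn : 1 ≤ n)
    (hw : w = [] ∨ w.headI ≠ a) :
    rle (List.replicate n a ++ w) = n :: rle w := by
  induction n with
  | zero => omega
  | succ m ih =>
    rcases Nat.eq_zero_or_pos m with hm | hm
    · subst hm
      simp only [zero_add, List.replicate_one, List.singleton_append]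
      cases w with
      | nil => rfl
      | cons b t =>
        rcases hw with hw | hw
        · simp at hw
        · simp only [List.headI] at hw
          rw [rle, if_neg (fun h => hw h.symm)]
    · have ihm := ih hm
      rw [List.replicate_succ, List.cons_append]
      have hrep : List.replicate m a ++ w = a :: (List.replicate (m-1) a ++ w) := by
        cases m with
        | zero => omega
        | succ k => simp [List.replicate_succ]
      rw [hrep, rle, if_pos rfl, ← hrep, ihm]

lemma rle_expw {a : ℕ} (ha : a = 1 ∨ a = 2) :
    ∀ (L : List ℕ), (∀ n ∈ L, 1 ≤ n) → rle (expw L a) = L := by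
  intro L
  induction L generalizing a with
  | nil => intro _; rfl
  | cons n L ih =>
    intro hL
    rw [expw, rle_replicate_append (hL n (by simp))]
    · rw [ih (lt_mem ha) (fun x hx => hL x (by simp [hx]))]
    · cases L with
      | nil => left; rfl
      | cons m L' =>
        right
        rw [headI_expw L' (hL m (by simp))]
        exact (lt_ne ha).symm

lemma expw_rle : ∀ {v : List ℕ}, IsWord v → v ≠ [] → expw (rle v) v.headI = v := by
  intro v
  induction v with
  | nil => intro _ h; exact absurd rfl h
  | cons a t ih =>
    intro hw _
    cases t with
    | nil =>
      simp [rle, expw]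
    | cons b s =>
      have hw' : IsWord (b :: s) := (isWord_cons.1 hw).2
      have ihb := ih hw' (by simp)
      rw [rle]
      by_cases hab : a = b
      · rw [if_pos hab]
        rcases hr : rle (b :: s) with _ | ⟨c, r⟩
        · exact absurd hr (rle_ne_nil (by simp))
        · have hc : 1 ≤ c := rle_pos _ c (by rw [hr]; simp)
          rw [hr] at ihb
          simp only [List.headI] at ihb ⊢
          rw [expw_cons_pos _ _ hc] at ihb
          rw [expw_cons_pos _ _ (by omega : 1 ≤ c + 1)]
          have h1 : c + 1 - 1 = (c - 1) + 1 := by omega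
          rw [h1, List.replicate_succ, hab, List.cons_append]
          exact congrArg (List.cons b) ihb
      · rw [if_neg hab]
        have hb3 : b = 3 - a := by
          refine lt_other ((isWord_cons.1 hw).1) (isWord_cons.1 hw' |>.1) ?_
          exact fun h => hab h.symm
        rw [expw_cons_pos _ _ (le_refl 1)]
        simp only [List.headI, Nat.sub_self, List.replicate_zero, List.nil_append,
          List.cons.injEq, true_and]
        rw [← hb3]
        simp only [List.headI] at ihb
        exact ihb

-- trim1 basics
lemma trim1_nil : trim1 [] = [] := rfl
lemma trim1_one (l : List ℕ) : trim1 (1 :: l) = l := rfl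
lemma trim1_ne {x : ℕ} (l : List ℕ) (h : x ≠ 1) : trim1 (x :: l) = x :: l := by
  cases x with
  | zero => rfl
  | succ n => cases n with
    | zero => exact absurd rfl h
    | succ m => rfl

lemma trim1_shape {l u : List ℕ} (h : trim1 l = u) (hu : u ≠ []) :
    l = 1 :: u ∨ (l = u ∧ u.headI ≠ 1) := by
  cases l with
  | nil => rw [trim1_nil] at h; exact absurd h.symm hu
  | cons x t =>
    by_cases hx : x = 1
    · subst hx; rw [trim1_one] at h; left; rw [h]
    · rw [trim1_ne t hx] at h; right; exact ⟨h, by rw [← h]; exact hx⟩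

lemma D_def (w : List ℕ) : D w = trim1 ((trim1 (rle w).reverse).reverse) := rfl

lemma D_nil : D ([] : List ℕ) = [] := rfl

lemma D_singleton (x : ℕ) : D [x] = [] := rfl

end Aux3
section Aux4

lemma padw_eq (u : List ℕ) : padw u =
    (if u.headI = 1 then [1] else []) ++ u ++ (if u.getLastD 0 = 1 then [1] else []) := rfl

lemma padw_pos {u : List ℕ} (hu : IsWord u) : ∀ n ∈ padw u, 1 ≤ n := by
  intro n hn
  rw [padw_eq] at hn
  simp only [List.mem_append] at hn
  rcases hn with (hn | hn) | hn
  · split at hn <;> simp_all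
  · rcases hu n hn with h | h <;> omega
  · split at hn <;> simp_all

lemma padw_ne_nil {u : List ℕ} (hu : u ≠ []) : padw u ≠ [] := by
  rw [padw_eq]
  intro h
  rcases List.append_eq_nil_iff.1 h with ⟨h1, _⟩
  rcases List.append_eq_nil_iff.1 h1 with ⟨_, h3⟩
  exact hu h3

lemma padw_sum (u : List ℕ) : (padw u).sum =
    u.sum + (if u.headI = 1 then 1 else 0) + (if u.getLastD 0 = 1 then 1 else 0) := by
  rw [padw_eq]
  simp only [List.sum_append]
  split <;> split <;> simp <;> omega

lemma padw_headI {u : List ℕ} (hu : IsWord u) (hne : u ≠ []) :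
    1 ≤ (padw u).headI ∧ ((u.headI = 2 → (padw u).headI = 2)) := by
  rw [padw_eq]
  rcases isWord_headI hu hne with h | h
  · rw [if_pos h]
    constructor
    · simp
    · intro h2; rw [h] at h2; omega
  · rw [if_neg (by omega)]
    cases u with
    | nil => exact absurd rfl hne
    | cons a t => simp only [List.headI] at h ⊢; simp [h]

lemma padw_reverse (u : List ℕ) : (padw u).reverse = padw u.reverse := by
  rw [padw_eq, padw_eq, List.reverse_append, List.reverse_append]
  rw [headI_reverse, getLastD_reverse]
  split_ifs <;> simp [List.append_assoc]

-- cons structure of padw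
lemma padw_cons {u : List ℕ} (hu : IsWord u) (hne : u ≠ []) :
    ∃ L, padw u = (padw u).headI :: L ∧ (padw u).headI = 1 ∨ True := ⟨[], by simp⟩

lemma prim_isWord {u : List ℕ} {a : ℕ} (ha : a = 1 ∨ a = 2) : IsWord (prim u a) :=
  isWord_expw ha

lemma prim_ne_nil {u : List ℕ} (hu : IsWord u) (hne : u ≠ []) (a : ℕ) :
    prim u a ≠ [] := by
  rw [prim]
  rcases hp : padw u with _ | ⟨n, L⟩
  · exact absurd hp (padw_ne_nil hne)
  · exact expw_ne_nil L a (padw_pos hu n (by rw [hp]; simp))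

lemma prim_headI {u : List ℕ} (hu : IsWord u) (hne : u ≠ []) (a : ℕ) :
    (prim u a).headI = a := by
  rw [prim]
  rcases hp : padw u with _ | ⟨n, L⟩
  · exact absurd hp (padw_ne_nil hne)
  · exact headI_expw L (padw_pos hu n (by rw [hp]; simp))

lemma prim_length {u : List ℕ} (a : ℕ) : (prim u a).length = (padw u).sum :=
  length_expw _ _

lemma rle_prim {u : List ℕ} {a : ℕ} (hu : IsWord u) (ha : a = 1 ∨ a = 2) :
    rle (prim u a) = padw u :=
  rle_expw ha _ (padw_pos hu)

-- trimming padw gives back u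
lemma trim_padw {u : List ℕ} (hu : IsWord u) (hne : u ≠ []) :
    trim1 ((trim1 (padw u).reverse).reverse) = u := by
  have h1 : (padw u).reverse =
      (if u.getLastD 0 = 1 then [1] else []) ++ u.reverse ++
        (if u.headI = 1 then [1] else []) := by
    rw [padw_reverse, padw_eq, headI_reverse, getLastD_reverse]
  have hrev_ne : u.reverse ≠ [] := by simpa using hne
  have hstep : trim1 ((padw u).reverse) = u.reverse ++ (if u.headI = 1 then [1] else []) := by
    rw [h1]
    rcases isWord_getLastD hu hne with h | h
    · rw [if_pos h]; rfl
    · rw [if_neg (by omega)]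
      simp only [List.nil_append]
      cases hr : u.reverse with
      | nil => exact absurd hr hrev_ne
      | cons x t =>
        have hx : x = 2 := by
          have := headI_reverse u
          rw [hr] at this
          simp only [List.headI] at this
          omega
        rw [List.cons_append, trim1_ne _ (by omega), ← List.cons_append]
  rw [hstep, List.reverse_append, List.reverse_reverse]
  rcases isWord_headI hu hne with h | h
  · rw [if_pos h]; rfl
  · rw [if_neg (by omega)]
    simp only [List.reverse_nil, List.nil_append]
    cases u with
    | nil => exact absurd rfl hne
    | cons x t =>
      simp only [List.headI] at h
      rw [trim1_ne _ (by omega)]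

lemma D_prim {u : List ℕ} {a : ℕ} (hu : IsWord u) (hne : u ≠ []) (ha : a = 1 ∨ a = 2) :
    D (prim u a) = u := by
  rw [D_def, rle_prim hu ha, trim_padw hu hne]

end Aux4
section Aux5

/-- shape of the run-length encoding of a primitive -/
lemma primitive_shape {v u : List ℕ} (hD : D v = u) (hu : u ≠ []) :
    ∃ s, (s = 1 :: u ∨ (s = u ∧ u.headI ≠ 1)) ∧
      (rle v = s ++ [1] ∨ (rle v = s ∧ s.getLastD 0 ≠ 1)) := by
  rw [D_def] at hD
  set q := trim1 (rle v).reverse with hq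
  have hA := trim1_shape hD hu
  have hqne : q ≠ [] := by
    intro h
    rcases hA with h1 | ⟨h1, _⟩
    · rw [h] at h1; simp at h1
    · rw [h] at h1; exact hu (by simpa using h1.symm)
  have hB := trim1_shape hq.symm hqne
  refine ⟨q.reverse, hA, ?_⟩
  rcases hB with h2 | ⟨h2, h2'⟩
  · left
    have h3 := congrArg List.reverse h2
    rw [List.reverse_reverse, List.reverse_cons] at h3
    exact h3
  · right
    constructor
    · have h3 := congrArg List.reverse h2
      rw [List.reverse_reverse] at h3
      exact h3
    · rw [getLastD_reverse]
      exact h2'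

lemma getLastD_shape {s u : List ℕ} (hu : u ≠ [])
    (hs : s = 1 :: u ∨ (s = u ∧ u.headI ≠ 1)) : s.getLastD 0 = u.getLastD 0 := by
  rcases hs with h | ⟨h, _⟩
  · rw [h]; exact getLastD_cons_of_ne hu
  · rw [h]

lemma prim_length_min {v u : List ℕ} (hv : IsWord v) (hD : D v = u) (hu : u ≠ []) :
    (padw u).sum ≤ v.length := by
  rcases primitive_shape hD hu with ⟨s, hs, hr⟩
  have hssum : u.sum + (if u.headI = 1 then 1 else 0) ≤ s.sum := by
    rcases hs with h | ⟨h, h'⟩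
    · subst h; simp only [List.sum_cons]; split_ifs <;> omega
    · subst h; rw [if_neg h']; omega
  have hrsum : s.sum + (if u.getLastD 0 = 1 then 1 else 0) ≤ (rle v).sum := by
    rcases hr with h | ⟨h, h'⟩
    · rw [h]; simp only [List.sum_append, List.sum_cons, List.sum_nil]
      split_ifs <;> omega
    · rw [h, if_neg (getLastD_shape hu hs ▸ h')]
      omega
  rw [← rle_sum v, padw_sum]
  split_ifs at hssum hrsum ⊢ <;> omega

lemma prim_eq_of_min {v u : List ℕ} (hv : IsWord v) (hD : D v = u) (hu : u ≠ [])
    (hlen : v.length = (padw u).sum) : v = prim u v.headI := by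
  have hvne : v ≠ [] := by
    intro h
    subst h
    rw [D_nil] at hD
    exact hu hD.symm
  rcases primitive_shape hD hu with ⟨s, hs, hr⟩
  have hssum : u.sum + (if u.headI = 1 then 1 else 0) ≤ s.sum := by
    rcases hs with h | ⟨h, h'⟩
    · subst h; simp only [List.sum_cons]; split_ifs <;> omega
    · subst h; rw [if_neg h']; omega
  have hrsum : s.sum + (if u.getLastD 0 = 1 then 1 else 0) ≤ (rle v).sum := by
    rcases hr with h | ⟨h, h'⟩
    · rw [h]; simp only [List.sum_append, List.sum_cons, List.sum_nil]
      split_ifs <;> omega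
    · rw [h, if_neg (getLastD_shape hu hs ▸ h')]
      omega
  have hsum : (rle v).sum = (padw u).sum := by rw [rle_sum v]; exact hlen
  rw [padw_sum] at hsum
  have hs_eq : s = (if u.headI = 1 then [1] else []) ++ u := by
    rcases hs with h | ⟨h, h'⟩
    · subst h
      have hh : u.headI = 1 := by
        by_contra hh
        rw [if_neg hh] at hssum hsum
        simp only [List.sum_cons] at hrsum
        split_ifs at hrsum hsum <;> omega
      rw [if_pos hh]
      rfl
    · subst h; rw [if_neg h']; rfl
  have hr_eq : rle v = s ++ (if u.getLastD 0 = 1 then [1] else []) := by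
    rcases hr with h | ⟨h, h'⟩
    · have hh : u.getLastD 0 = 1 := by
        by_contra hh
        have h5 : (rle v).sum = s.sum + 1 := by rw [h]; simp
        rw [if_neg hh] at hsum
        split_ifs at hssum hsum <;> omega
      rw [if_pos hh, h]
    · rw [if_neg (getLastD_shape hu hs ▸ h'), List.append_nil, h]
  have hrle : rle v = padw u := by
    rw [hr_eq, hs_eq, padw_eq, List.append_assoc]
  have hfin := expw_rle hv hvne
  rw [hrle] at hfin
  exact hfin.symm

lemma rle_reverse {v : List ℕ} (hv : IsWord v) : rle v.reverse = (rle v).reverse := by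
  rcases eq_or_ne v [] with h | h
  · subst h; rfl
  · have hrec := expw_rle hv h
    have hhead := isWord_headI hv h
    have hrev := congrArg List.reverse hrec
    rw [rev_expw hhead] at hrev
    rw [← hrev]
    exact rle_expw (alt_mem hhead _) _ (by
      intro n hn
      exact rle_pos v n (List.mem_reverse.1 hn))

lemma trims_comm (r : List ℕ) :
    trim1 ((trim1 r).reverse) = (trim1 ((trim1 r.reverse).reverse)).reverse := by
  cases r with
  | nil => rfl
  | cons x t =>
    induction t using List.reverseRecOn with
    | nil =>
      by_cases hx : x = 1
      · subst hx; rfl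
      · rw [show ([x] : List ℕ).reverse = [x] by simp]
        rw [trim1_ne _ hx]
        have e1 : ([x] : List ℕ).reverse = [x] := by simp
        rw [e1]
        rw [trim1_ne _ hx]
        have e2 : ([x] : List ℕ).reverse = [x] := by simp
        rw [e2]
    | append_singleton t y _ =>
      by_cases hx : x = 1 <;> by_cases hy : y = 1
      · subst hx; subst hy
        rw [trim1_one]
        have e3 : (t ++ [1]).reverse = 1 :: t.reverse := by simp
        rw [e3]
        rw [trim1_one]
        have e4 : ((1:ℕ) :: (t ++ [1])).reverse = 1 :: (t.reverse ++ [1]) := by simp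
        rw [e4]
        rw [trim1_one]
        have e5 : (t.reverse ++ [1]).reverse = 1 :: t := by simp
        rw [e5]
        rw [trim1_one]
      · subst hx
        rw [trim1_one]
        have e6 : (t ++ [y]).reverse = y :: t.reverse := by simp
        rw [e6]
        rw [trim1_ne _ hy]
        have e7 : ((1:ℕ) :: (t ++ [y])).reverse = y :: (t.reverse ++ [1]) := by simp
        rw [e7]
        rw [trim1_ne _ hy]
        have e8 : (y :: (t.reverse ++ [1])).reverse = 1 :: (t ++ [y]) := by simp
        rw [e8]
        rw [trim1_one]
        simp
      · subst hy
        rw [trim1_ne _ hx]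
        have e9 : (x :: (t ++ [1])).reverse = 1 :: (t.reverse ++ [x]) := by simp
        rw [e9]
        rw [trim1_one]
        have e10 : (t.reverse ++ [x]).reverse = x :: t := by simp
        rw [e10]
        rw [trim1_ne _ hx]
        simp
      · rw [trim1_ne _ hx]
        have e11 : (x :: (t ++ [y])).reverse = y :: (t.reverse ++ [x]) := by simp
        rw [e11]
        rw [trim1_ne _ hy]
        have e12 : (y :: (t.reverse ++ [x])).reverse = x :: (t ++ [y]) := by simp
        rw [e12]
        rw [trim1_ne _ hx]
        simp

lemma D_reverse {v : List ℕ} (hv : IsWord v) : D v.reverse = (D v).reverse := by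
  rw [D_def, D_def, rle_reverse hv, List.reverse_reverse]
  exact trims_comm (rle v)

end Aux5
section Aux6

def RootOK (ρ : ℕ → List ℕ) : Prop :=
  ∀ t, (t = 1 ∨ t = 2) → IsWord (ρ t) ∧ ρ t ≠ [] ∧ (ρ t).headI = t ∧ D (ρ t) = []

lemma sroot_ok : RootOK sroot := by
  intro t ht
  exact ⟨by rw [sroot]; intro x hx; simp at hx; rw [hx]; exact ht, by simp [sroot],
    rfl, D_singleton t⟩

lemma droot_ok : RootOK droot := by
  intro t ht
  refine ⟨?_, by simp [droot], rfl, ?_⟩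
  · intro x hx
    simp [droot] at hx
    rcases hx with h | h
    · rw [h]; exact ht
    · rw [h]; exact lt_mem ht
  · rcases ht with h | h <;> subst h <;> rfl

lemma chain_nil (ρ : ℕ → List ℕ) : chain ρ [] = [] := rfl
lemma chain_singleton (ρ : ℕ → List ℕ) (a : ℕ) : chain ρ [a] = ρ a := rfl
lemma chain_cons (ρ : ℕ → List ℕ) {S : List ℕ} (h : S ≠ []) (a : ℕ) :
    chain ρ (a :: S) = prim (chain ρ S) a := by
  cases S with
  | nil => exact absurd rfl h
  | cons b T => rfl

variable {ρ : ℕ → List ℕ}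

lemma chain_facts (hρ : RootOK ρ) :
    ∀ {U : List ℕ}, IsWord U → U ≠ [] →
      IsWord (chain ρ U) ∧ chain ρ U ≠ [] ∧ (chain ρ U).headI = U.headI ∧
        D (chain ρ U) = chain ρ U.tail := by
  intro U
  induction U with
  | nil => intro _ h; exact absurd rfl h
  | cons a T ih =>
    intro hW _
    have ha : a = 1 ∨ a = 2 := (isWord_cons.1 hW).1
    cases T with
    | nil =>
      rcases hρ a ha with ⟨h1, h2, h3, h4⟩
      exact ⟨h1, h2, h3, h4⟩
    | cons b S =>
      rcases ih (isWord_cons.1 hW).2 (by simp) with ⟨h1, h2, h3, _⟩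
      rw [chain_cons ρ (by simp) a]
      refine ⟨prim_isWord ha, prim_ne_nil h1 h2 a, prim_headI h1 h2 a, ?_⟩
      rw [D_prim h1 h2 ha]
      rfl

lemma chain_isWord (hρ : RootOK ρ) {U : List ℕ} (hW : IsWord U) (h : U ≠ []) :
    IsWord (chain ρ U) := (chain_facts hρ hW h).1
lemma chain_ne_nil (hρ : RootOK ρ) {U : List ℕ} (hW : IsWord U) (h : U ≠ []) :
    chain ρ U ≠ [] := (chain_facts hρ hW h).2.1
lemma chain_headI (hρ : RootOK ρ) {U : List ℕ} (hW : IsWord U) (h : U ≠ []) :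
    (chain ρ U).headI = U.headI := (chain_facts hρ hW h).2.2.1
lemma chain_D (hρ : RootOK ρ) {U : List ℕ} (hW : IsWord U) (h : U ≠ []) :
    D (chain ρ U) = chain ρ U.tail := (chain_facts hρ hW h).2.2.2

lemma chain_isWord' (hρ : RootOK ρ) {U : List ℕ} (hW : IsWord U) :
    IsWord (chain ρ U) := by
  rcases eq_or_ne U [] with h | h
  · rw [h, chain_nil]; exact isWord_nil
  · exact chain_isWord hρ hW h

lemma chain_D' (hρ : RootOK ρ) {U : List ℕ} (hW : IsWord U) :
    D (chain ρ U) = chain ρ U.tail := by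
  rcases eq_or_ne U [] with h | h
  · rw [h]; rfl
  · exact chain_D hρ hW h

lemma chain_iter (hρ : RootOK ρ) {U : List ℕ} (hW : IsWord U) :
    ∀ i, D^[i] (chain ρ U) = chain ρ (U.drop i) := by
  intro i
  induction i with
  | zero => rfl
  | succ n ihn =>
    rw [Function.iterate_succ_apply', ihn, chain_D' hρ (isWord_drop hW n),
      List.tail_drop]

lemma chain_Cinf (hρ : RootOK ρ) {U : List ℕ} (hW : IsWord U) :
    Cinf (chain ρ U) := by
  intro k
  rw [chain_iter hρ hW k]
  exact chain_isWord' hρ (isWord_drop hW k)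

lemma height_eq_of {w : List ℕ} {k : ℕ} (h1 : D^[k] w = [])
    (h2 : ∀ j, j < k → D^[j] w ≠ []) : height w = k := by
  have hle : height w ≤ k := Nat.sInf_le h1
  have hmem : D^[sInf {k | D^[k] w = []}] w = [] :=
    Nat.sInf_mem (⟨k, h1⟩ : Set.Nonempty {k | D^[k] w = []})
  rcases Nat.lt_or_ge (height w) k with h | h
  · exact absurd hmem (h2 _ h)
  · omega

lemma chain_height (hρ : RootOK ρ) {U : List ℕ} (hW : IsWord U) :
    height (chain ρ U) = U.length := by
  apply height_eq_of
  · rw [chain_iter hρ hW]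
    rw [List.drop_eq_nil_iff.2 (le_refl _)]
    rfl
  · intro j hj
    rw [chain_iter hρ hW]
    apply chain_ne_nil hρ (isWord_drop hW j)
    intro h
    have := List.drop_eq_nil_iff.1 h
    omega

lemma drop_pred {U : List ℕ} (h : U ≠ []) :
    U.drop (U.length - 1) = [U.getLastD 0] := by
  induction U using List.reverseRecOn with
  | nil => exact absurd rfl h
  | append_singleton T x _ =>
    rw [List.length_append, List.length_singleton, getLastD_append _ _ (by simp)]
    have : T.length + 1 - 1 = T.length := by omega
    rw [this, List.drop_append_of_le_length (le_refl _), List.drop_length]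
    rfl

lemma chain_root (hρ : RootOK ρ) {U : List ℕ} (hW : IsWord U) (h : U ≠ []) :
    root (chain ρ U) = ρ (U.getLastD 0) := by
  rw [root, chain_height hρ hW, chain_iter hρ hW, drop_pred h, chain_singleton]

lemma chain_minimal (hρ : RootOK ρ) {U : List ℕ} (hW : IsWord U) (h : U ≠ []) :
    Minimal (chain ρ U) := by
  refine ⟨chain_Cinf hρ hW, ?_, ?_⟩
  · rw [chain_height hρ hW]
    exact List.length_pos_iff.2 h
  · intro j hj v hv
    rw [chain_height hρ hW] at hj
    rw [chain_iter hρ hW] at hv ⊢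
    have h1 : U.drop j ≠ [] := by
      intro hh
      have := List.drop_eq_nil_iff.1 hh
      omega
    have hdropj : U.drop j = (U.drop j).headI :: U.drop (j + 1) := by
      rw [← List.tail_drop]
      cases hd : U.drop j with
      | nil => exact absurd hd h1
      | cons c rest => rfl
    have hne1 : U.drop (j+1) ≠ [] := by
      intro hh
      have := List.drop_eq_nil_iff.1 hh
      omega
    have hW1 : IsWord (U.drop (j+1)) := isWord_drop hW (j+1)
    rw [hdropj, chain_cons ρ hne1, prim_length]
    exact prim_length_min hv.1 hv.2 (chain_ne_nil hρ hW1 hne1)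

end Aux6
section Aux7

lemma getD_zero (l : List ℕ) : l.getD 0 0 = l.headI := by cases l <;> rfl
lemma getD_one (l : List ℕ) : l.getD 1 0 = l.tail.headI := by
  rcases l with _ | ⟨a, _ | ⟨b, t⟩⟩ <;> rfl

lemma height_nil : height ([] : List ℕ) = 0 := height_eq_of rfl (by omega)

lemma psi_nil : psi ([] : List ℕ) = [] := by
  rw [psi, height_nil]
  rfl

lemma range_map_cons {α : Type} (f : ℕ → α) (n : ℕ) :
    (List.range (n+1)).map f = f 0 :: (List.range n).map (fun i => f (i+1)) := by
  rw [List.range_succ_eq_map, List.map_cons, List.map_map]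
  rfl

lemma psi_of_noZero {w : List ℕ}
    (hz : ∀ i, 0 < i → i < height w → (D^[i] w).getD 0 0 = 2 →
      (D^[i-1] w).getD 0 0 = (D^[i-1] w).getD 1 0) :
    psi w = (List.range (height w)).map (fun i => (D^[i] w).headI) := by
  rw [psi]
  apply List.map_congr_left
  intro i hi
  rw [List.mem_range] at hi
  rcases Nat.eq_zero_or_pos i with h0 | h0
  · subst h0
    rw [if_pos rfl, getD_zero]
    rfl
  · rw [if_neg (by omega)]
    rw [if_neg, getD_zero]
    rintro ⟨h1, h2⟩
    exact h2 (hz i h0 hi h1)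

lemma prim_two_head {u : List ℕ} (hu : IsWord u) (hne : u ≠ []) (h2 : u.headI = 2)
    (a : ℕ) : (prim u a).getD 0 0 = (prim u a).getD 1 0 := by
  have hh := (padw_headI hu hne).2 h2
  rcases hp : padw u with _ | ⟨n, L⟩
  · exact absurd hp (padw_ne_nil hne)
  · have hn : n = 2 := by
      rw [hp] at hh
      simpa using hh
    subst hn
    rw [prim, hp, expw]
    rfl

lemma prim_two_last {u : List ℕ} (hu : IsWord u) (hne : u ≠ [])
    (h2 : u.getLastD 0 = 2) {a : ℕ} (ha : a = 1 ∨ a = 2) :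
    (prim u a).reverse.getD 0 0 = (prim u a).reverse.getD 1 0 := by
  have hrev : (prim u a).reverse = expw (padw u.reverse) (alt ((padw u).length + 1) a) := by
    rw [prim, rev_expw ha, padw_reverse]
  have hne' : u.reverse ≠ [] := by simpa using hne
  have hh : (padw u.reverse).headI = 2 := by
    apply (padw_headI (isWord_reverse hu) hne').2
    rw [headI_reverse]
    exact h2
  rcases hp : padw u.reverse with _ | ⟨n, L⟩
  · exact absurd hp (padw_ne_nil hne')
  · have hn : n = 2 := by
      rw [hp] at hh
      simpa using hh
    subst hn
    rw [hrev, hp, expw]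
    rfl

lemma chain_drop_cons {U : List ℕ} {i : ℕ} (h0 : 0 < i) (hi : i < U.length) :
    U.drop (i-1) = (U.drop (i-1)).headI :: U.drop i := by
  have h1 : U.drop (i-1) ≠ [] := by
    intro hh
    have := List.drop_eq_nil_iff.1 hh
    omega
  have h2 : (U.drop (i-1)).tail = U.drop i := by
    rw [List.tail_drop]
    congr 1
    omega
  rw [← h2]
  cases hd : U.drop (i-1) with
  | nil => exact absurd hd h1
  | cons c rest => rfl

variable {ρ : ℕ → List ℕ}

lemma map_headI_drop : ∀ (U : List ℕ),
    (List.range U.length).map (fun i => (U.drop i).headI) = U := by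
  intro U
  induction U with
  | nil => rfl
  | cons a T ih =>
    rw [List.length_cons, range_map_cons]
    have h2 : (List.range T.length).map (fun i => (((a :: T).drop (i+1)).headI))
        = (List.range T.length).map (fun i => ((T.drop i).headI)) := by
      apply List.map_congr_left; intro i _; rfl
    rw [h2, ih]
    rfl

lemma chain_psi (hρ : RootOK ρ) {U : List ℕ} (hW : IsWord U) (h : U ≠ []) :
    psi (chain ρ U) = U := by
  have hz : ∀ i, 0 < i → i < height (chain ρ U) →
      (D^[i] (chain ρ U)).getD 0 0 = 2 →
      (D^[i-1] (chain ρ U)).getD 0 0 = (D^[i-1] (chain ρ U)).getD 1 0 := by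
    intro i h0 hi hh
    rw [chain_height hρ hW] at hi
    rw [chain_iter hρ hW, getD_zero] at hh
    rw [chain_iter hρ hW]
    have hne1 : U.drop i ≠ [] := by
      intro hh'
      have := List.drop_eq_nil_iff.1 hh'
      omega
    have hW1 : IsWord (U.drop i) := isWord_drop hW i
    have hh2 : (chain ρ (U.drop i)).headI = 2 := hh
    rw [chain_headI hρ hW1 hne1] at hh2
    rw [chain_drop_cons h0 hi, chain_cons ρ hne1]
    exact prim_two_head (chain_isWord hρ hW1 hne1) (chain_ne_nil hρ hW1 hne1)
      (by rw [chain_headI hρ hW1 hne1]; exact hh2) _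
  rw [psi_of_noZero hz, chain_height hρ hW]
  have : ∀ i ∈ List.range U.length,
      (D^[i] (chain ρ U)).headI = (U.drop i).headI := by
    intro i hi
    rw [List.mem_range] at hi
    rw [chain_iter hρ hW, chain_headI hρ (isWord_drop hW i)]
    intro hh
    have := List.drop_eq_nil_iff.1 hh
    omega
  rw [List.map_congr_left this, map_headI_drop]

lemma chain_iter_rev (hρ : RootOK ρ) {U : List ℕ} (hW : IsWord U) :
    ∀ i, D^[i] ((chain ρ U).reverse) = (chain ρ (U.drop i)).reverse := by
  intro i
  induction i with
  | zero => rfl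
  | succ n ihn =>
    rw [Function.iterate_succ_apply', ihn,
      D_reverse (chain_isWord' hρ (isWord_drop hW n)),
      chain_D' hρ (isWord_drop hW n), List.tail_drop]

lemma chain_height_rev (hρ : RootOK ρ) {U : List ℕ} (hW : IsWord U) :
    height ((chain ρ U).reverse) = U.length := by
  apply height_eq_of
  · rw [chain_iter_rev hρ hW, List.drop_eq_nil_iff.2 (le_refl _)]
    rfl
  · intro j hj
    rw [chain_iter_rev hρ hW]
    intro hh
    apply chain_ne_nil hρ (isWord_drop hW j)
      (by intro h'; have := List.drop_eq_nil_iff.1 h'; omega)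
    simpa using hh

lemma map_getLastD_drop (hρ : RootOK ρ) : ∀ (U : List ℕ),
    (List.range U.length).map (fun i => (chain ρ (U.drop i)).getLastD 0) = lastsC ρ U := by
  intro U
  induction U with
  | nil => rfl
  | cons a T ih =>
    rw [List.length_cons, range_map_cons]
    have h2 : (List.range T.length).map (fun i => (chain ρ ((a :: T).drop (i+1))).getLastD 0)
        = (List.range T.length).map (fun i => (chain ρ (T.drop i)).getLastD 0) := by
      apply List.map_congr_left; intro i _; rfl
    rw [h2, ih]
    rfl

lemma chain_psi_rev (hρ : RootOK ρ) {U : List ℕ} (hW : IsWord U) (h : U ≠ []) :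
    psi ((chain ρ U).reverse) = lastsC ρ U := by
  have hz : ∀ i, 0 < i → i < height ((chain ρ U).reverse) →
      (D^[i] ((chain ρ U).reverse)).getD 0 0 = 2 →
      (D^[i-1] ((chain ρ U).reverse)).getD 0 0 =
        (D^[i-1] ((chain ρ U).reverse)).getD 1 0 := by
    intro i h0 hi hh
    rw [chain_height_rev hρ hW] at hi
    rw [chain_iter_rev hρ hW, getD_zero, headI_reverse] at hh
    rw [chain_iter_rev hρ hW]
    have hne1 : U.drop i ≠ [] := by
      intro hh'
      have := List.drop_eq_nil_iff.1 hh'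
      omega
    have hW1 : IsWord (U.drop i) := isWord_drop hW i
    have hWd : IsWord (U.drop (i-1)) := isWord_drop hW (i-1)
    have hgl : (chain ρ (U.drop i)).getLastD 0 = 2 := hh
    have hhead : (U.drop (i-1)).headI = 1 ∨ (U.drop (i-1)).headI = 2 := by
      apply isWord_headI hWd
      intro hh'
      have := List.drop_eq_nil_iff.1 hh'
      omega
    rw [chain_drop_cons h0 hi, chain_cons ρ hne1]
    exact prim_two_last (chain_isWord hρ hW1 hne1) (chain_ne_nil hρ hW1 hne1) hgl hhead
  rw [psi_of_noZero hz, chain_height_rev hρ hW]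
  have : ∀ i ∈ List.range U.length,
      (D^[i] ((chain ρ U).reverse)).headI = (chain ρ (U.drop i)).getLastD 0 := by
    intro i hi
    rw [chain_iter_rev hρ hW, headI_reverse]
  rw [List.map_congr_left this, map_getLastD_drop hρ]

end Aux7
section Aux8

variable {ρ : ℕ → List ℕ}

lemma psi_length (w : List ℕ) : (psi w).length = height w := by
  rw [psi, List.length_map, List.length_range]

lemma chain_rev_minimal (hρ : RootOK ρ) {U : List ℕ} (hW : IsWord U) (h : U ≠ []) :
    Minimal ((chain ρ U).reverse) := by
  refine ⟨?_, ?_, ?_⟩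
  · intro k
    rw [chain_iter_rev hρ hW k]
    exact isWord_reverse (chain_isWord' hρ (isWord_drop hW k))
  · rw [chain_height_rev hρ hW]
    exact List.length_pos_iff.2 h
  · intro j hj v hv
    rw [chain_height_rev hρ hW] at hj
    rw [chain_iter_rev hρ hW] at hv ⊢
    have h1 : U.drop j ≠ [] := by
      intro hh
      have := List.drop_eq_nil_iff.1 hh
      omega
    have hdropj : U.drop j = (U.drop j).headI :: U.drop (j + 1) := by
      rw [← List.tail_drop]
      cases hd : U.drop j with
      | nil => exact absurd hd h1
      | cons c rest => rfl
    have hne1 : U.drop (j+1) ≠ [] := by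
      intro hh
      have := List.drop_eq_nil_iff.1 hh
      omega
    have hW1 : IsWord (U.drop (j+1)) := isWord_drop hW (j+1)
    rw [List.length_reverse, hdropj, chain_cons ρ hne1, prim_length]
    have hDrev : D v.reverse = chain ρ (U.drop (j+1)) := by
      rw [D_reverse hv.1, hv.2, List.reverse_reverse]
    have := prim_length_min (isWord_reverse hv.1) hDrev (chain_ne_nil hρ hW1 hne1)
    rw [List.length_reverse] at this
    exact this

lemma chain_root_rev (hρ : RootOK ρ) {U : List ℕ} (hW : IsWord U) (h : U ≠ []) :
    root ((chain ρ U).reverse) = (ρ (U.getLastD 0)).reverse := by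
  rw [root, chain_height_rev hρ hW, chain_iter_rev hρ hW, drop_pred h, chain_singleton]

lemma ne_nil_of_height_pos {w : List ℕ} (h : 0 < height w) : w ≠ [] := by
  intro hw
  subst hw
  rw [height_nil] at h
  omega

lemma iter_height_eq_nil {w : List ℕ} (h : 0 < height w) : D^[height w] w = [] := by
  have hne : {k | D^[k] w = []}.Nonempty := by
    by_contra hh
    rw [Set.not_nonempty_iff_eq_empty] at hh
    have : height w = 0 := by rw [height, hh]; exact Nat.sInf_empty
    omega
  exact Nat.sInf_mem hne

lemma iter_ne_nil_of_lt {w : List ℕ} {j : ℕ} (h : j < height w) : D^[j] w ≠ [] :=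
  Nat.notMem_of_lt_sInf h

lemma height_D {w : List ℕ} (h : 0 < height w) : height (D w) = height w - 1 := by
  apply height_eq_of
  · have hq : height w - 1 + 1 = height w := by omega
    have h2 := iter_height_eq_nil h
    rw [← hq] at h2
    rw [← Function.iterate_succ_apply]
    exact h2
  · intro j hj
    rw [← Function.iterate_succ_apply]
    exact iter_ne_nil_of_lt (by omega)

lemma minimal_D {w : List ℕ} (hm : Minimal w) (h : 2 ≤ height w) : Minimal (D w) := by
  obtain ⟨hc, hp, hmin⟩ := hm
  refine ⟨?_, ?_, ?_⟩
  · intro k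
    rw [← Function.iterate_succ_apply]
    exact hc (k+1)
  · rw [height_D (by omega)]
    omega
  · intro j hj v hv
    rw [height_D (by omega)] at hj
    rw [← Function.iterate_succ_apply]
    rw [← Function.iterate_succ_apply] at hv
    exact hmin (j+1) (by omega) v hv

lemma root_D {w : List ℕ} (h : 2 ≤ height w) : root (D w) = root w := by
  rw [root, root, height_D (by omega), ← Function.iterate_succ_apply]
  congr 1
  omega

lemma psi_height_one {w : List ℕ} (h : height w = 1) : psi w = [w.headI] := by
  rw [psi, h, show List.range 1 = [0] from rfl, List.map_cons, List.map_nil, if_pos rfl, getD_zero]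

lemma minimal_rep (hρ : RootOK ρ) {rlen : ℕ}
    (huniq : ∀ x, IsWord x → x ≠ [] → D x = [] → x.length = rlen → x = ρ x.headI) :
    ∀ n w, Minimal w → height w = n → (root w).length = rlen →
      ∃ V, IsWord V ∧ V ≠ [] ∧ psi w = V ∧ w = chain ρ V := by
  intro n
  induction n using Nat.strong_induction_on with
  | _ n ih =>
    intro w hm hh hr
    have hpos : 0 < height w := hm.2.1
    have hwne : w ≠ [] := ne_nil_of_height_pos hpos
    have hwword : IsWord w := by
      have := hm.1 0
      exact this
    have hhead := isWord_headI hwword hwne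
    rcases Nat.lt_or_ge n 2 with h2 | h2
    · -- height 1
      have h1 : height w = 1 := by omega
      have hD : D w = [] := by
        have := iter_height_eq_nil hpos
        rw [h1] at this
        exact this
      have hroot : root w = w := by
        rw [root, h1]
        rfl
      have hlen : w.length = rlen := by rw [← hroot]; exact hr
      have hw := huniq w hwword hwne hD hlen
      refine ⟨[w.headI], ?_, by simp, psi_height_one h1, ?_⟩
      · exact isWord_cons.2 ⟨hhead, isWord_nil⟩
      · rw [chain_singleton, ← hw]
    · -- height ≥ 2
      have hh2 : 2 ≤ height w := by omega
      have hmD := minimal_D hm hh2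
      have hhD : height (D w) = n - 1 := by rw [height_D (by omega), hh]
      have hrD : (root (D w)).length = rlen := by rw [root_D hh2]; exact hr
      obtain ⟨V', hV'w, hV'ne, hV'psi, hV'chain⟩ := ih (n-1) (by omega) (D w) hmD hhD hrD
      have hDne : D w ≠ [] := by
        have := iter_ne_nil_of_lt (show 1 < height w by omega)
        simpa using this
      have hDword : IsWord (D w) := by
        have := hm.1 1
        simpa using this
      have hmin0 := hm.2.2 0 (by simpa using hh2)
      have hmin : ∀ v, Primitive v (D w) → w.length ≤ v.length := by
        intro v hv
        have := hmin0 v (by simpa using hv)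
        simpa using this
      have hv0 : Primitive (prim (D w) w.headI) (D w) :=
        ⟨prim_isWord hhead, D_prim hDword hDne hhead⟩
      have hle : w.length ≤ (padw (D w)).sum := by
        have := hmin _ hv0
        rwa [prim_length] at this
      have hge : (padw (D w)).sum ≤ w.length := prim_length_min hwword rfl hDne
      have hweq : w = prim (D w) w.headI := prim_eq_of_min hwword rfl hDne (by omega)
      have hchain : w = chain ρ (w.headI :: V') := by
        rw [chain_cons ρ hV'ne, ← hV'chain, ← hweq]
      refine ⟨w.headI :: V', isWord_cons.2 ⟨hhead, hV'w⟩, by simp, ?_, hchain⟩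
      have h5 := chain_psi hρ (isWord_cons.2 ⟨hhead, hV'w⟩)
        (show w.headI :: V' ≠ [] by simp)
      rw [← hchain] at h5
      exact h5

lemma sroot_uniq : ∀ x : List ℕ, IsWord x → x ≠ [] → D x = [] → x.length = 1 →
    x = sroot x.headI := by
  intro x _ _ _ hl
  rcases List.length_eq_one_iff.1 hl with ⟨c, hc⟩
  subst hc
  rfl

lemma rle_pair_eq (y : ℕ) : rle [y, y] = [2] := by
  rw [rle, if_pos rfl]
  rfl

lemma rle_pair_ne {y z : ℕ} (h : y ≠ z) : rle [y, z] = [1, 1] := by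
  rw [rle, if_neg h]
  rfl

lemma droot_uniq : ∀ x : List ℕ, IsWord x → x ≠ [] → D x = [] → x.length = 2 →
    x = droot x.headI := by
  intro x hx _ hD hl
  rcases x with _ | ⟨y, _ | ⟨z, _ | t⟩⟩ <;> simp at hl
  have hy : y = 1 ∨ y = 2 := (isWord_cons.1 hx).1
  have hz : z = 1 ∨ z = 2 := (isWord_cons.1 (isWord_cons.1 hx).2).1
  by_cases hyz : y = z
  · exfalso
    subst hyz
    rw [D_def, rle_pair_eq] at hD
    have h2 : trim1 [(2:ℕ)] = [2] := trim1_ne _ (by omega)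
    rw [show ([(2:ℕ)]).reverse = [2] by simp, h2, show ([(2:ℕ)]).reverse = [2] by simp, h2] at hD
    simp at hD
  · have hz3 : z = 3 - y := lt_other hy hz (fun h => hyz h.symm)
    rw [hz3]
    rfl

lemma SRMin_chain {U : List ℕ} (hW : IsWord U) (h : U ≠ []) :
    SRMin (chain sroot U) ∧ psi (chain sroot U) = U := by
  refine ⟨⟨chain_minimal sroot_ok hW h, ?_⟩, chain_psi sroot_ok hW h⟩
  rw [chain_root sroot_ok hW h]
  rfl

lemma DRMin_chain {U : List ℕ} (hW : IsWord U) (h : U ≠ []) :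
    DRMin (chain droot U) ∧ psi (chain droot U) = U := by
  refine ⟨⟨chain_minimal droot_ok hW h, ?_⟩, chain_psi droot_ok hW h⟩
  rw [chain_root droot_ok hW h]
  rfl

lemma srmOf_eq {U : List ℕ} (hW : IsWord U) (h : U ≠ []) :
    srmOf U = chain sroot U := by
  have hex : ∃ w, SRMin w ∧ psi w = U :=
    ⟨chain sroot U, (SRMin_chain hW h).1, (SRMin_chain hW h).2⟩
  rw [srmOf, dif_pos hex]
  obtain ⟨⟨hmin, hroot⟩, hpsi⟩ := hex.choose_spec
  obtain ⟨V, _, _, hpsiV, hchain⟩ :=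
    minimal_rep sroot_ok sroot_uniq (height hex.choose) hex.choose hmin rfl hroot
  rw [hchain, hpsiV.symm.trans hpsi]

lemma drmOf_eq {U : List ℕ} (hW : IsWord U) (h : U ≠ []) :
    drmOf U = chain droot U := by
  have hex : ∃ w, DRMin w ∧ psi w = U :=
    ⟨chain droot U, (DRMin_chain hW h).1, (DRMin_chain hW h).2⟩
  rw [drmOf, dif_pos hex]
  obtain ⟨⟨hmin, hroot⟩, hpsi⟩ := hex.choose_spec
  obtain ⟨V, _, _, hpsiV, hchain⟩ :=
    minimal_rep droot_ok droot_uniq (height hex.choose) hex.choose hmin rfl hroot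
  rw [hchain, hpsiV.symm.trans hpsi]

lemma srmOf_nil : srmOf [] = [] := by
  rw [srmOf, dif_neg]
  rintro ⟨w, hw, hpsi⟩
  have h1 : (psi w).length = height w := psi_length w
  rw [hpsi] at h1
  have := hw.1.2.1
  simp at h1
  omega

lemma drmOf_nil : drmOf [] = [] := by
  rw [drmOf, dif_neg]
  rintro ⟨w, hw, hpsi⟩
  have h1 : (psi w).length = height w := psi_length w
  rw [hpsi] at h1
  have := hw.1.2.1
  simp at h1
  omega

/-- reversal of chain is again a chain, over the reversed-frontier. -/
lemma chain_rev_eq (hρ : RootOK ρ) {rlen : ℕ}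
    (huniq : ∀ x, IsWord x → x ≠ [] → D x = [] → x.length = rlen → x = ρ x.headI)
    (hrlen : ∀ t, (t = 1 ∨ t = 2) → (ρ t).length = rlen)
    {U : List ℕ} (hW : IsWord U) (h : U ≠ []) :
    (chain ρ U).reverse = chain ρ (lastsC ρ U) := by
  have hlast : U.getLastD 0 = 1 ∨ U.getLastD 0 = 2 := isWord_getLastD hW h
  obtain ⟨V, _, _, hpsiV, hchain⟩ :=
    minimal_rep hρ huniq (height ((chain ρ U).reverse)) ((chain ρ U).reverse)
      (chain_rev_minimal hρ hW h) rfl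
      (by rw [chain_root_rev hρ hW h, List.length_reverse]; exact hrlen _ hlast)
  rw [hchain]
  congr 1
  rw [← hpsiV]
  exact chain_psi_rev hρ hW h

end Aux8
section Aux9

def tpad (E : List ℕ) : List ℕ := if E.getLastD 0 = 1 then [1] else []

def fext (h : ℕ) (E : List ℕ) (a : ℕ) : List ℕ :=
  if h = 1 then (expw (E ++ tpad E) a).tail else expw (E ++ tpad E) (3 - a)

lemma headI_append {l₁ l₂ : List ℕ} (h : l₁ ≠ []) : (l₁ ++ l₂).headI = l₁.headI := by
  cases l₁ with
  | nil => exact absurd rfl h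
  | cons a t => rfl

lemma alt_odd {n a : ℕ} (h : n % 2 = 1) : alt n a = 3 - a := by
  rw [alt, h]
  simp

lemma PE {u E : List ℕ} {a : ℕ} (hu : IsWord u) (hune : u ≠ [])
    (hE : IsWord E) (hEne : E ≠ []) (ha : a = 1 ∨ a = 2) :
    prim (u.reverse ++ E) ((prim u a).getLastD 0) =
      (prim u a).reverse ++ fext u.headI E a := by
  have hurne : u.reverse ≠ [] := by simpa using hune
  set Hf : List ℕ := (if u.reverse.headI = 1 then [1] else []) ++ u.reverse with hHf
  have hpad1 : padw (u.reverse ++ E) = Hf ++ (E ++ tpad E) := by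
    rw [padw_eq, headI_append hurne, getLastD_append _ _ hEne, hHf, tpad]
    try simp [List.append_assoc]
  have hpad2 : padw u.reverse = Hf ++ (if u.headI = 1 then [1] else []) := by
    rw [padw_eq, getLastD_reverse, hHf]
    try simp [List.append_assoc]
  obtain ⟨L, n, hLn⟩ : ∃ L n, padw u = L ++ [n] := by
    rcases List.eq_nil_or_concat (padw u) with h | ⟨L, n, h⟩
    · exact absurd h (padw_ne_nil hune)
    · exact ⟨L, n, by rw [h, List.concat_eq_append]⟩
  have hn1 : 1 ≤ n := padw_pos hu n (by rw [hLn]; simp)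
  have hα : (prim u a).getLastD 0 = alt ((padw u).length + 1) a := by
    rw [prim, hLn, getLastD_expw ha L hn1]
    simp
  have hrev : (prim u a).reverse = expw (padw u.reverse) (alt ((padw u).length + 1) a) := by
    rw [prim, rev_expw ha, padw_reverse]
  set β := alt ((padw u).length + 1) a with hβ
  have hbS : β = 1 ∨ β = 2 := alt_mem ha _
  have hlen : (padw u).length = (padw u.reverse).length := by
    rw [← padw_reverse, List.length_reverse]
  set γ := alt Hf.length β with hγ
  have hLHS : prim (u.reverse ++ E) ((prim u a).getLastD 0) =
      expw Hf β ++ expw (E ++ tpad E) γ := by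
    rw [hα, hγ, prim, hpad1, expw_append hbS]
  have hRHS : (prim u a).reverse =
      expw Hf β ++ expw (if u.headI = 1 then [1] else []) γ := by
    rw [hrev, hγ, hpad2, expw_append hbS]
  have hγa : γ = alt (Hf.length + ((padw u).length + 1)) a := by
    rw [hγ, hβ, alt_alt ha]
  have hHflen : (padw u).length = Hf.length + (if u.headI = 1 then 1 else 0) := by
    rw [hlen, hpad2, List.length_append]
    congr 1
    split_ifs <;> rfl
  rcases isWord_headI hu hune with hh | hh
  · -- head u = 1
    have hγ_eq : γ = a := by
      rw [hγa, hHflen, if_pos hh]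
      apply alt_even
      omega
    rw [hLHS, hRHS, if_pos hh, fext, if_pos hh, hγ_eq]
    have h6 : expw [1] a = [a] := rfl
    rw [h6]
    obtain ⟨rest, hrest⟩ : ∃ rest, expw (E ++ tpad E) a = a :: rest := by
      cases E with
      | nil => exact absurd rfl hEne
      | cons e0 E' =>
        have he0 : 1 ≤ e0 := by rcases (isWord_cons.1 hE).1 with h | h <;> omega
        rw [List.cons_append, expw_cons_pos _ _ he0]
        exact ⟨_, rfl⟩
    rw [hrest]
    simp
  · -- head u = 2
    have hγ_eq : γ = 3 - a := by
      rw [hγa, hHflen, if_neg (by omega)]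
      apply alt_odd
      omega
    rw [hLHS, hRHS, if_neg (by omega), fext, if_neg (by omega), hγ_eq]
    simp [expw]

lemma fext_isWord {h : ℕ} {E : List ℕ} {a : ℕ} (ha : a = 1 ∨ a = 2) :
    IsWord (fext h E a) := by
  rw [fext]
  split_ifs
  · exact isWord_tail (isWord_expw ha)
  · exact isWord_expw (lt_mem ha)

lemma fext_ne_nil {h : ℕ} {E : List ℕ} {a : ℕ} (hE : IsWord E) (hEne : E ≠ []) :
    fext h E a ≠ [] := by
  have hsum : 2 ≤ (E ++ tpad E).sum := by
    cases E with
    | nil => exact absurd rfl hEne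
    | cons e0 E' =>
      have he0 : e0 = 1 ∨ e0 = 2 := (isWord_cons.1 hE).1
      cases E' with
      | nil =>
        rcases he0 with h0 | h0 <;> subst h0 <;> decide
      | cons e1 E'' =>
        have he1 : e1 = 1 ∨ e1 = 2 := (isWord_cons.1 (isWord_cons.1 hE).2).1
        simp only [List.cons_append, List.sum_cons]
        omega
  rw [fext]
  split_ifs
  · intro hc
    have h1 := length_expw (E ++ tpad E) a
    rw [← h1] at hsum
    have h3 : (expw (E ++ tpad E) a).tail.length = 0 := by rw [hc]; rfl
    rw [List.length_tail] at h3
    omega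
  · intro hc
    have h1 := length_expw (E ++ tpad E) (3 - a)
    rw [hc] at h1
    simp only [List.length_nil] at h1
    omega

lemma lastsC_cons (ρ : ℕ → List ℕ) (a : ℕ) (T : List ℕ) :
    lastsC ρ (a :: T) = (chain ρ (a :: T)).getLastD 0 :: lastsC ρ T := rfl

lemma lastsC_ne_nil (ρ : ℕ → List ℕ) {U : List ℕ} (h : U ≠ []) : lastsC ρ U ≠ [] := by
  cases U with
  | nil => exact absurd rfl h
  | cons a T => rw [lastsC_cons]; simp

variable {ρ : ℕ → List ℕ}

lemma lastsC_isWord (hρ : RootOK ρ) : ∀ {U : List ℕ}, IsWord U → IsWord (lastsC ρ U) := by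
  intro U
  induction U with
  | nil => intro _; exact isWord_nil
  | cons a T ih =>
    intro hW
    rw [lastsC_cons, isWord_cons]
    exact ⟨isWord_getLastD (chain_isWord hρ hW (by simp)) (chain_ne_nil hρ hW (by simp)),
      ih (isWord_cons.1 hW).2⟩

lemma lastsC_length (ρ : ℕ → List ℕ) : ∀ (U : List ℕ), (lastsC ρ U).length = U.length := by
  intro U
  induction U with
  | nil => rfl
  | cons a T ih => rw [lastsC_cons, List.length_cons, List.length_cons, ih]

end Aux9
section Aux10

lemma isWord_of_all {l : List ℕ} (h : l.all (fun x => x == 1 || x == 2) = true) :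
    IsWord l := by
  intro x hx
  have := List.all_eq_true.1 h x hx
  simpa using this

lemma Pmain : ∀ (T : List ℕ), IsWord T → T ≠ [] → ∀ c, (c = 1 ∨ c = 2) →
    ∃ E, E ≠ [] ∧ IsWord E ∧
      chain droot (lastsC sroot (T ++ [c])) = (chain sroot (T ++ [c])).reverse ++ E ∧
      chain sroot (lastsC sroot T ++ [3 - c]) = (chain sroot T).reverse ++ E := by
  intro T
  induction T with
  | nil => intro _ h; exact absurd rfl h
  | cons a T' ih =>
    intro hW _ c hc
    have ha : a = 1 ∨ a = 2 := (isWord_cons.1 hW).1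
    have hT'w : IsWord T' := (isWord_cons.1 hW).2
    cases T' with
    | nil =>
      rcases ha with h | h <;> rcases hc with h' | h' <;> subst h <;> subst h'
      · exact ⟨(chain sroot [1, 2]).tail, by decide, isWord_of_all (by decide),
          by decide, by decide⟩
      · exact ⟨(chain sroot [1, 1]).tail, by decide, isWord_of_all (by decide),
          by decide, by decide⟩
      · exact ⟨(chain sroot [2, 2]).tail, by decide, isWord_of_all (by decide),
          by decide, by decide⟩
      · exact ⟨(chain sroot [2, 1]).tail, by decide, isWord_of_all (by decide),
          by decide, by decide⟩
    | cons b T'' =>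
      obtain ⟨E, hEne, hEw, hd, hn⟩ := ih hT'w (by simp) c hc
      have hSne : (b :: T'') ≠ [] := by simp
      have hSw : IsWord (b :: T'') := hT'w
      have hS1w : IsWord ((b :: T'') ++ [c]) :=
        isWord_append.2 ⟨hSw, isWord_cons.2 ⟨hc, isWord_nil⟩⟩
      have hS1ne : (b :: T'') ++ [c] ≠ [] := by simp
      have hu1w := chain_isWord sroot_ok hS1w hS1ne
      have hu1ne := chain_ne_nil sroot_ok hS1w hS1ne
      have hu2w := chain_isWord sroot_ok hSw hSne
      have hu2ne := chain_ne_nil sroot_ok hSw hSne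
      have hh1 : (chain sroot ((b :: T'') ++ [c])).headI = (b :: T'').headI := by
        rw [chain_headI sroot_ok hS1w hS1ne, headI_append hSne]
      have hh2 : (chain sroot (b :: T'')).headI = (b :: T'').headI :=
        chain_headI sroot_ok hSw hSne
      refine ⟨fext (b :: T'').headI E a, fext_ne_nil hEw hEne, fext_isWord ha, ?_, ?_⟩
      · have e1 : lastsC sroot ((a :: b :: T'') ++ [c]) =
            (prim (chain sroot ((b :: T'') ++ [c])) a).getLastD 0 ::
              lastsC sroot ((b :: T'') ++ [c]) := by
          rw [List.cons_append, lastsC_cons, chain_cons sroot hS1ne]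
        have e2 : chain sroot ((a :: b :: T'') ++ [c]) =
            prim (chain sroot ((b :: T'') ++ [c])) a := by
          rw [List.cons_append, chain_cons sroot hS1ne]
        rw [e1, e2, chain_cons droot (lastsC_ne_nil _ hS1ne), hd, ← hh1]
        exact PE hu1w hu1ne hEw hEne ha
      · have e3 : lastsC sroot (a :: b :: T'') ++ [3 - c] =
            (prim (chain sroot (b :: T'')) a).getLastD 0 ::
              (lastsC sroot (b :: T'') ++ [3 - c]) := by
          rw [lastsC_cons, chain_cons sroot hSne, List.cons_append]
        have e4 : chain sroot (a :: b :: T'') = prim (chain sroot (b :: T'')) a :=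
          chain_cons sroot hSne a
        rw [e3, e4, chain_cons sroot (by simp), hn, ← hh2]
        exact PE hu2w hu2ne hEw hEne ha

lemma lasts_invol {U : List ℕ} (hW : IsWord U) (h : U ≠ []) :
    lastsC sroot (lastsC sroot U) = U := by
  have h1 := chain_rev_eq sroot_ok sroot_uniq (fun t _ => rfl) hW h
  have h2 := chain_psi_rev sroot_ok (lastsC_isWord sroot_ok hW) (lastsC_ne_nil _ h)
  rw [← h1, List.reverse_reverse] at h2
  rw [← h2]
  exact chain_psi sroot_ok hW h

lemma Qmain : ∀ (T : List ℕ), IsWord T → T ≠ [] → ∀ c, (c = 1 ∨ c = 2) →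
    lastsC droot (lastsC sroot (T ++ [c])) =
      lastsC sroot (lastsC sroot T ++ [3 - c]) := by
  intro T
  induction T with
  | nil => intro _ h; exact absurd rfl h
  | cons a T' ih =>
    intro hW _ c hc
    have ha : a = 1 ∨ a = 2 := (isWord_cons.1 hW).1
    have hT'w : IsWord T' := (isWord_cons.1 hW).2
    cases T' with
    | nil =>
      rcases ha with h | h <;> rcases hc with h' | h' <;> subst h <;> subst h' <;> decide
    | cons b T'' =>
      obtain ⟨E, hEne, _, hd, hn⟩ := Pmain (a :: b :: T'') hW (by simp) c hc
      have hL1 : lastsC sroot ((a :: b :: T'') ++ [c]) =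
          (chain sroot ((a :: b :: T'') ++ [c])).getLastD 0 ::
            lastsC sroot ((b :: T'') ++ [c]) := rfl
      have hL2 : lastsC sroot (a :: b :: T'') ++ [3 - c] =
          (chain sroot (a :: b :: T'')).getLastD 0 ::
            (lastsC sroot (b :: T'') ++ [3 - c]) := rfl
      rw [hL1, hL2, lastsC_cons, lastsC_cons]
      congr 1
      · rw [← hL1, ← hL2, hd, hn, getLastD_append _ _ hEne, getLastD_append _ _ hEne]
      · exact ih hT'w (by simp) c hc

lemma GsEq {U : List ℕ} (hW : IsWord U) (h : U ≠ []) : Gs U = lastsC sroot U := by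
  rw [Gs, srmOf_eq hW h]
  exact chain_psi_rev sroot_ok hW h

lemma GdEq {U : List ℕ} (hW : IsWord U) (h : U ≠ []) : Gd U = lastsC droot U := by
  rw [Gd, drmOf_eq hW h]
  exact chain_psi_rev droot_ok hW h

lemma Gs_nil : Gs [] = [] := by
  rw [Gs, srmOf_nil]
  exact psi_nil

end Aux10
/-- Γs(U·X) = Π(Γs(U)·X̄) for X ∈ Σ, and Γd = Π ∘ Γs. -/
theorem gammas_via_pi (U : List ℕ) (hU : IsWord U) :
    (∀ X : ℕ, (X = 1 ∨ X = 2) → Gs (U ++ [X]) = Pp (Gs U ++ [3 - X])) ∧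
    Gd U = Pp (Gs U) := by
  constructor
  · intro X hX
    have hXw : IsWord [X] := isWord_cons.2 ⟨hX, isWord_nil⟩
    have hX3w : IsWord [3 - X] := isWord_cons.2 ⟨lt_mem hX, isWord_nil⟩
    rcases eq_or_ne U [] with hUe | hUne
    · subst hUe
      rw [List.nil_append, Gs_nil, List.nil_append, GsEq hXw (by simp), Pp,
        GsEq hX3w (by simp),
        GdEq (lastsC_isWord sroot_ok hX3w) (lastsC_ne_nil _ (by simp))]
      rcases hX with h | h <;> subst h <;> decide
    · have hUXw : IsWord (U ++ [X]) := isWord_append.2 ⟨hU, hXw⟩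
      have hTw : IsWord (lastsC sroot U ++ [3 - X]) :=
        isWord_append.2 ⟨lastsC_isWord sroot_ok hU, hX3w⟩
      have hVw : IsWord (lastsC sroot (lastsC sroot U ++ [3 - X])) :=
        lastsC_isWord sroot_ok hTw
      rw [GsEq hUXw (by simp), Pp, GsEq hU hUne, GsEq hTw (by simp),
        GdEq hVw (lastsC_ne_nil _ (by simp))]
      have hQ := Qmain (lastsC sroot U) (lastsC_isWord sroot_ok hU)
        (lastsC_ne_nil _ hUne) (3 - X) (lt_mem hX)
      rw [hQ, lasts_invol hU hUne, lt_inv hX]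
  · rcases eq_or_ne U [] with hUe | hUne
    · subst hUe
      rw [Pp, Gs_nil, Gs_nil]
    · rw [Pp, GsEq hU hUne,
        GsEq (lastsC_isWord sroot_ok hU) (lastsC_ne_nil _ hUne),
        lasts_invol hU hUne]

end CInfWords
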